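/- Let G be a finite simple graph with no isolated vertices, having n vertices and maximum degree Δ(G). Then the total transitivity satisfies Tr_t(G) ≤ min{Δ(G), ⌊n/2⌋}. -/
import Mathlib


/-- A total transitive partition of `G` into `k` parts: the parts are nonempty, they
partition the vertex set, and `V_i` dominates `V_j` for all `i ≤ j` (where a set
dominates another — possibly itself — if every vertex of the latter is adjacent to
some vertex of the former). -/
def TTPartition {V : Type*} (G : SimpleGraph V) (k : ℕ) (P : Fin k → Set V) : Prop :=
  (∀ i, (P i).Nonempty) ∧
  (∀ v : V, ∃! i, v ∈ P i) ∧
  (∀ i j : Fin k, i ≤ j → ∀ v ∈ P j, ∃ u ∈ P i, G.Adj u v)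

/-- The total transitivity of a finite graph with no isolated vertices is at most
`min (Δ(G)) ⌊n/2⌋`. -/
theorem stmt0 {V : Type*} [Fintype V] (G : SimpleGraph V) [DecidableRel G.Adj]
    (hiso : ∀ v : V, ∃ u : V, G.Adj v u)
    (k : ℕ) (P : Fin k → Set V) (hP : TTPartition G k P) :
    k ≤ min G.maxDegree (Fintype.card V / 2) := by
  classical
  obtain ⟨hne, huniq, hdom⟩ := hP
  have hdisj : ∀ {x : V} {i j : Fin k}, x ∈ P i → x ∈ P j → i = j := by
    intro x i j hi hj
    obtain ⟨a, -, ha⟩ := huniq x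
    rw [ha i hi, ha j hj]
  refine le_min ?_ ?_
  · rcases Nat.eq_zero_or_pos k with hk | hk
    · simp [hk]
    · set jl : Fin k := ⟨k - 1, by omega⟩ with hjl
      obtain ⟨v, hv⟩ := hne jl
      have hch : ∀ i : Fin k, ∃ u, u ∈ P i ∧ G.Adj u v := by
        intro i
        obtain ⟨u, hu, hadj⟩ := hdom i jl (by
          simp only [Fin.le_def, hjl]
          omega) v hv
        exact ⟨u, hu, hadj⟩
      choose g hg hadj using hch
      have hginj : Function.Injective g := fun a b hab =>
        hdisj (hg a) (hab ▸ hg b)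
      have hdeg : k ≤ G.degree v := by
        rw [← Fintype.card_fin k, SimpleGraph.degree]
        have : ∀ i : Fin k, g i ∈ G.neighborFinset v := by
          intro i
          rw [SimpleGraph.mem_neighborFinset]
          exact (hadj i).symm
        exact Finset.card_le_card_of_injOn g (fun i _ => this i)
          (fun a _ b _ h => hginj h)
      exact hdeg.trans (G.degree_le_maxDegree v)
  · have hch : ∀ i : Fin k, ∃ p : V × V, p.1 ∈ P i ∧ p.2 ∈ P i ∧ G.Adj p.1 p.2 := by
      intro i
      obtain ⟨v, hv⟩ := hne i
      obtain ⟨u, hu, hadj⟩ := hdom i i le_rfl v hv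
      exact ⟨(u, v), hu, hv, hadj⟩
    choose p hp1 hp2 hadj using hch
    have hFinj : Function.Injective (fun x : Fin k × Bool =>
        if x.2 then (p x.1).1 else (p x.1).2) := by
      rintro ⟨a, ba⟩ ⟨b, bb⟩ hab
      simp only at hab
      have hab2 : a = b := by
        cases ba <;> cases bb <;> simp_all <;>
          [exact hdisj (hp2 a) (hab ▸ hp2 b);
           exact hdisj (hp2 a) (hab ▸ hp1 b);
           exact hdisj (hp1 a) (hab ▸ hp2 b);
           exact hdisj (hp1 a) (hab ▸ hp1 b)]
      subst hab2
      cases ba <;> cases bb <;> simp_all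
      · exact (G.ne_of_adj (hadj a)) hab.symm
      · exact (G.ne_of_adj (hadj a)) hab
    have hcard : k * 2 ≤ Fintype.card V := by
      have := Fintype.card_le_of_injective _ hFinj
      simpa using this
    exact Nat.le_div_iff_mul_le (by norm_num) |>.mpr hcard
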